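/- For any a ∈ (-1,1), the derivative of the amplifier function φ satisfies φ'(a) = (√2 / (√π (1-a²)^{3/2})) · E[X² exp(-X²a²/(2(1-a²)))], where X is a bounded real random variable. -/

import Mathlib

open MeasureTheory Real

noncomputable def erf (x : ℝ) : ℝ := (2 / Real.sqrt π) * ∫ s in (0:ℝ)..x, Real.exp (-s ^ 2)

noncomputable def algInv (a : ℝ) : ℝ := a / Real.sqrt (1 - a ^ 2)

lemma cont_gauss : Continuous (fun s : ℝ => Real.exp (-s ^ 2)) := by continuity

lemma hasDerivAt_erf (t : ℝ) :
    HasDerivAt erf (2 / Real.sqrt π * Real.exp (-t ^ 2)) t := by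
  have h : HasDerivAt (fun x => ∫ s in (0:ℝ)..x, Real.exp (-s ^ 2)) (Real.exp (-t ^ 2)) t :=
    intervalIntegral.integral_hasDerivAt_right
      (cont_gauss.intervalIntegrable 0 t)
      (cont_gauss.stronglyMeasurableAtFilter _ _)
      cont_gauss.continuousAt
  exact h.const_mul (2 / Real.sqrt π)

lemma continuous_erf : Continuous erf :=
  continuous_iff_continuousAt.mpr fun t => (hasDerivAt_erf t).continuousAt

lemma erf_le (t : ℝ) : |erf t| ≤ 2 / Real.sqrt π * |t| := by
  have h : ‖∫ s in (0:ℝ)..t, Real.exp (-s ^ 2)‖ ≤ 1 * |t - 0| := by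
    apply intervalIntegral.norm_integral_le_of_norm_le_const
    intro s _
    rw [Real.norm_eq_abs, abs_of_pos (Real.exp_pos _)]
    exact Real.exp_le_one_iff.mpr (neg_nonpos.mpr (sq_nonneg s))
  have h2 : (0:ℝ) ≤ 2 / Real.sqrt π := by positivity
  calc |erf t| = 2 / Real.sqrt π * ‖∫ s in (0:ℝ)..t, Real.exp (-s ^ 2)‖ := by
        rw [erf, abs_mul, abs_of_nonneg h2]; rfl
    _ ≤ 2 / Real.sqrt π * |t| := by
        apply mul_le_mul_of_nonneg_left _ h2
        simpa using h

lemma rpow32 {t : ℝ} (ht : 0 < t) : t ^ ((3:ℝ)/2) = t * Real.sqrt t := by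
  rw [Real.sqrt_eq_rpow, show (3:ℝ)/2 = 1 + 1/2 by norm_num, Real.rpow_add ht, Real.rpow_one]

lemma hasDerivAt_algInv {a : ℝ} (h : 0 < 1 - a ^ 2) :
    HasDerivAt algInv (((1 - a ^ 2) ^ ((3:ℝ)/2))⁻¹) a := by
  have hs : Real.sqrt (1 - a ^ 2) ≠ 0 := Real.sqrt_ne_zero'.mpr h
  have hsq : Real.sqrt (1 - a ^ 2) ^ 2 = 1 - a ^ 2 := Real.sq_sqrt h.le
  have hinner : HasDerivAt (fun a : ℝ => 1 - a ^ 2) (-(2 * a)) a := by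
    simpa using ((hasDerivAt_pow 2 a).const_sub 1)
  have hsqrt : HasDerivAt (fun a : ℝ => Real.sqrt (1 - a ^ 2))
      (-(2 * a) / (2 * Real.sqrt (1 - a ^ 2))) a := by
    have := (Real.hasDerivAt_sqrt (ne_of_gt h)).comp a hinner
    refine this.congr_deriv (Eq.symm ?_)
    ring
  have hdiv := (hasDerivAt_id a).div hsqrt hs
  refine hdiv.congr_deriv (Eq.symm ?_)
  rw [rpow32 h]
  set s := Real.sqrt (1 - a ^ 2) with hsdef
  rw [← hsq]
  have hspos : 0 < s := Real.sqrt_pos.mpr h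
  clear_value s
  field_simp
  have hid : a ^ 2 = a * id a := sq a
  linear_combination (-1 : ℝ) * hsq + hid

lemma hasDerivAt_integrand (x : ℝ) {a : ℝ} (h : 0 < 1 - a ^ 2) :
    HasDerivAt (fun a => x * erf (x * algInv a / Real.sqrt 2))
      (Real.sqrt 2 / (Real.sqrt π * (1 - a ^ 2) ^ ((3:ℝ)/2)) *
        (x ^ 2 * Real.exp (-(x ^ 2 * a ^ 2) / (2 * (1 - a ^ 2))))) a := by
  have hu : HasDerivAt (fun a => x * algInv a / Real.sqrt 2)
      (x * ((1 - a ^ 2) ^ ((3:ℝ)/2))⁻¹ / Real.sqrt 2) a :=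
    ((hasDerivAt_algInv h).const_mul x).div_const _
  have hc := ((hasDerivAt_erf (x * algInv a / Real.sqrt 2)).comp a hu).const_mul x
  refine hc.congr_deriv (Eq.symm ?_)
  have hs : Real.sqrt (1 - a ^ 2) ≠ 0 := Real.sqrt_ne_zero'.mpr h
  have hsq : Real.sqrt (1 - a ^ 2) ^ 2 = 1 - a ^ 2 := Real.sq_sqrt h.le
  have hs2 : Real.sqrt 2 ^ 2 = 2 := Real.sq_sqrt (by norm_num)
  have hs2ne : Real.sqrt 2 ≠ 0 := by positivity
  have hpi : Real.sqrt π ≠ 0 := by positivity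
  have harg : -(x ^ 2 * a ^ 2) / (2 * (1 - a ^ 2)) = -(x * algInv a / Real.sqrt 2) ^ 2 := by
    rw [algInv]
    field_simp
    linear_combination (-x ^ 2 * a ^ 2 * Real.sqrt (1 - a ^ 2) ^ 2) * hs2 + (-2 * x ^ 2 * a ^ 2) * hsq
  rw [harg]
  have hP : (1 - a ^ 2) ^ ((3:ℝ)/2) ≠ 0 := by
    rw [rpow32 h]; positivity
  generalize hEE : Real.exp (-(x * algInv a / Real.sqrt 2) ^ 2) = E
  generalize hPP : (1 - a ^ 2) ^ ((3:ℝ)/2) = P at hP ⊢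
  field_simp
  linear_combination (x ^ 2 * E) * hs2

theorem amplifier_deriv_formula
    (μ : Measure ℝ) [IsProbabilityMeasure μ]
    (M : ℝ) (hbdd : ∀ᵐ x ∂μ, |x| ≤ M)
    (φ : ℝ → ℝ)
    (hφ : ∀ a ∈ Set.Ioo (-1 : ℝ) 1,
      φ a = ∫ x, x * erf (x * algInv a / Real.sqrt 2) ∂μ) :
    ∀ a ∈ Set.Ioo (-1 : ℝ) 1,
      HasDerivAt φ
        (Real.sqrt 2 / (Real.sqrt π * (1 - a ^ 2) ^ ((3 : ℝ) / 2)) *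
          ∫ x, x ^ 2 * Real.exp (-(x ^ 2 * a ^ 2) / (2 * (1 - a ^ 2))) ∂μ) a := by
  intro a ha
  obtain ⟨ha1, ha2⟩ := ha
  have habs : |a| < 1 := abs_lt.mpr ⟨ha1, ha2⟩
  have hM : 0 ≤ M := le_trans (abs_nonneg _) hbdd.exists.choose_spec
  set b : ℝ := (1 + |a|) / 2 with hbdef
  set ε : ℝ := (1 - |a|) / 2 with hedef
  have hε : 0 < ε := by simp only [hedef]; linarith
  have hb1 : b < 1 := by simp only [hbdef]; linarith
  have hb0 : 0 ≤ b := by simp only [hbdef]; positivity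
  have hδ : 0 < 1 - b ^ 2 := by nlinarith
  -- membership of ball in controlled region
  have hball : ∀ a' ∈ Metric.ball a ε, |a'| ≤ b ∧ 0 < 1 - a' ^ 2 ∧ 1 - b ^ 2 ≤ 1 - a' ^ 2 := by
    intro a' ha'
    rw [Metric.mem_ball, Real.dist_eq] at ha'
    have h1 : |a'| ≤ b := by
      have := abs_sub_abs_le_abs_sub a' a
      simp only [hbdef]; simp only [hedef] at ha'
      linarith
    have h2 : a' ^ 2 ≤ b ^ 2 := by
      have := sq_abs a'
      nlinarith [abs_nonneg a']
    exact ⟨h1, by nlinarith, by linarith⟩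
  set F : ℝ → ℝ → ℝ := fun a x => x * erf (x * algInv a / Real.sqrt 2) with hF
  set F' : ℝ → ℝ → ℝ := fun a x =>
    Real.sqrt 2 / (Real.sqrt π * (1 - a ^ 2) ^ ((3:ℝ)/2)) *
      (x ^ 2 * Real.exp (-(x ^ 2 * a ^ 2) / (2 * (1 - a ^ 2)))) with hF'
  have ha2pos : 0 < 1 - a ^ 2 := by nlinarith
  have hCpos : (0:ℝ) < Real.sqrt 2 / (Real.sqrt π * (1 - b ^ 2) ^ ((3:ℝ)/2)) := by
    have : (0:ℝ) < (1 - b ^ 2) ^ ((3:ℝ)/2) := Real.rpow_pos_of_pos hδ _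
    have hππ : (0:ℝ) < Real.sqrt π := Real.sqrt_pos.mpr Real.pi_pos
    positivity
  set C : ℝ := Real.sqrt 2 / (Real.sqrt π * (1 - b ^ 2) ^ ((3:ℝ)/2)) * M ^ 2 with hC
  -- measurability of F a' for a' near a
  have hF_meas : ∀ᶠ a' in nhds a, AEStronglyMeasurable (F a') μ := by
    filter_upwards with a'
    exact (Continuous.mul continuous_id
      (continuous_erf.comp ((continuous_id.mul continuous_const).div_const _))).aestronglyMeasurable
  -- integrability of F a
  have hF_int : Integrable (F a) μ := by
    apply Integrable.mono' (integrable_const (M * (2 / Real.sqrt π * (M * |algInv a| / Real.sqrt 2))))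
    · exact (Continuous.mul continuous_id
        (continuous_erf.comp ((continuous_id.mul continuous_const).div_const _))).aestronglyMeasurable
    · filter_upwards [hbdd] with x hx
      have h1 : |erf (x * algInv a / Real.sqrt 2)| ≤
          2 / Real.sqrt π * (|x| * |algInv a| / Real.sqrt 2) := by
        have := erf_le (x * algInv a / Real.sqrt 2)
        rwa [abs_div, abs_mul, abs_of_pos (Real.sqrt_pos.mpr (by norm_num : (0:ℝ) < 2))] at this
      have h2 : (0:ℝ) ≤ 2 / Real.sqrt π := by positivity
      calc ‖F a x‖ = |x| * |erf (x * algInv a / Real.sqrt 2)| := by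
            rw [hF]; simp [abs_mul]
        _ ≤ M * (2 / Real.sqrt π * (M * |algInv a| / Real.sqrt 2)) := by
            have h3 : 2 / Real.sqrt π * (|x| * |algInv a| / Real.sqrt 2) ≤
                2 / Real.sqrt π * (M * |algInv a| / Real.sqrt 2) := by gcongr
            exact mul_le_mul hx (h1.trans h3) (abs_nonneg _) hM
  -- measurability of F' a
  have hF'_meas : AEStronglyMeasurable (F' a) μ := by
    apply Continuous.aestronglyMeasurable
    apply Continuous.mul continuous_const
    exact (continuous_pow 2).mul (Real.continuous_exp.comp (by fun_prop))
  -- the derivative bound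
  have h_bound : ∀ᵐ x ∂μ, ∀ a' ∈ Metric.ball a ε, ‖F' a' x‖ ≤ C := by
    filter_upwards [hbdd] with x hx
    intro a' ha'
    obtain ⟨-, hpos', hle'⟩ := hball a' ha'
    have hexp : Real.exp (-(x ^ 2 * a' ^ 2) / (2 * (1 - a' ^ 2))) ≤ 1 := by
      apply Real.exp_le_one_iff.mpr
      apply div_nonpos_of_nonpos_of_nonneg
      · nlinarith [sq_nonneg x, sq_nonneg a']
      · linarith
    have hple : (1 - b ^ 2) ^ ((3:ℝ)/2) ≤ (1 - a' ^ 2) ^ ((3:ℝ)/2) :=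
      Real.rpow_le_rpow hδ.le hle' (by norm_num)
    have hppos : (0:ℝ) < (1 - b ^ 2) ^ ((3:ℝ)/2) := Real.rpow_pos_of_pos hδ _
    have hppos' : (0:ℝ) < (1 - a' ^ 2) ^ ((3:ℝ)/2) := Real.rpow_pos_of_pos hpos' _
    have hππ : (0:ℝ) < Real.sqrt π := Real.sqrt_pos.mpr Real.pi_pos
    have hcle : Real.sqrt 2 / (Real.sqrt π * (1 - a' ^ 2) ^ ((3:ℝ)/2)) ≤
        Real.sqrt 2 / (Real.sqrt π * (1 - b ^ 2) ^ ((3:ℝ)/2)) := by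
      apply div_le_div_of_nonneg_left (by positivity) (by positivity)
      exact mul_le_mul_of_nonneg_left hple hππ.le
    have hx2 : x ^ 2 ≤ M ^ 2 := by nlinarith [sq_abs x, abs_nonneg x]
    have hnn : (0:ℝ) ≤ Real.sqrt 2 / (Real.sqrt π * (1 - a' ^ 2) ^ ((3:ℝ)/2)) := by positivity
    calc ‖F' a' x‖ = Real.sqrt 2 / (Real.sqrt π * (1 - a' ^ 2) ^ ((3:ℝ)/2)) *
          (x ^ 2 * Real.exp (-(x ^ 2 * a' ^ 2) / (2 * (1 - a' ^ 2)))) := by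
          rw [hF', Real.norm_eq_abs, abs_of_nonneg]
          positivity
      _ ≤ Real.sqrt 2 / (Real.sqrt π * (1 - b ^ 2) ^ ((3:ℝ)/2)) * M ^ 2 := by
          apply mul_le_mul hcle _ (by positivity) hCpos.le
          calc x ^ 2 * Real.exp (-(x ^ 2 * a' ^ 2) / (2 * (1 - a' ^ 2))) ≤ x ^ 2 * 1 :=
                mul_le_mul_of_nonneg_left hexp (sq_nonneg x)
            _ = x ^ 2 := mul_one _
            _ ≤ M ^ 2 := hx2
      _ = C := rfl
  have bound_integrable : Integrable (fun _ : ℝ => C) μ := integrable_const C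
  -- differentiability
  have h_diff : ∀ᵐ x ∂μ, ∀ a' ∈ Metric.ball a ε, HasDerivAt (F · x) (F' a' x) a' := by
    filter_upwards with x
    intro a' ha'
    exact hasDerivAt_integrand x (hball a' ha').2.1
  have key := (hasDerivAt_integral_of_dominated_loc_of_deriv_le (Metric.ball_mem_nhds a hε) hF_meas hF_int hF'_meas
    h_bound bound_integrable h_diff).2
  have heq : (fun a' => ∫ x, F a' x ∂μ) =ᶠ[nhds a] φ := by
    filter_upwards [isOpen_Ioo.mem_nhds (Set.mem_Ioo.mpr ⟨ha1, ha2⟩)] with a' ha'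
    exact (hφ a' ha').symm
  have key2 : HasDerivAt φ (∫ x, F' a x ∂μ) a := key.congr_of_eventuallyEq heq.symm
  have : ∫ x, F' a x ∂μ = Real.sqrt 2 / (Real.sqrt π * (1 - a ^ 2) ^ ((3:ℝ)/2)) *
      ∫ x, x ^ 2 * Real.exp (-(x ^ 2 * a ^ 2) / (2 * (1 - a ^ 2))) ∂μ :=
    integral_const_mul _ _
  rwa [this] at key2
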